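/- For α > 1, β ≥ α, finite sets X and Y, a channel W : X → dist(Y) with full support, and any x' ∈ X: the supremum over probability distributions P̃ on X of ∑_y W(x',y)^(1-β) (∑_x P̃(x) W(x,y)^α)^(β/α) is attained at a point mass, i.e., it equals max_{x ∈ X} ∑_y W(x',y)^(1-β) W(x,y)^β. Consequently, for α ≤ β, maximal α,β-leakage equals max_{x,x'} (α/((α-1)β)) log ∑_y W(x',y)^(1-β) W(x,y)^β. -/
import Mathlib


open Finset Real

section Aux
variable {X Y : Type*} [Fintype X] [Nonempty X] [Fintype Y] [Nonempty Y] [DecidableEq X]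

lemma keyA (W : X → Y → ℝ) (hW : ∀ x y, 0 < W x y)
    {α β : ℝ} (hα : 1 < α) (hβ : α ≤ β) (x' : X)
    (Pt : X → ℝ) (hPt : ∀ x, 0 ≤ Pt x) (hPt1 : ∑ x, Pt x = 1) :
    ∑ y, W x' y ^ (1 - β) * (∑ x, Pt x * W x y ^ α) ^ (β / α) ≤
      Finset.univ.sup' Finset.univ_nonempty
        (fun x => ∑ y, W x' y ^ (1 - β) * W x y ^ β) := by
  have hα0 : (0:ℝ) < α := by linarith
  have hp : 1 ≤ β / α := (one_le_div hα0).mpr hβ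
  have step1 : ∀ y, (∑ x, Pt x * W x y ^ α) ^ (β / α) ≤ ∑ x, Pt x * W x y ^ β := by
    intro y
    have h := (convexOn_rpow hp).map_sum_le (t := Finset.univ)
      (w := Pt) (p := fun x => W x y ^ α)
      (fun i _ => hPt i) hPt1
      (fun i _ => Set.mem_Ici.mpr (Real.rpow_nonneg (hW i y).le α))
    simp only [smul_eq_mul] at h
    have he : ∀ x : X, (W x y ^ α) ^ (β / α) = W x y ^ β := by
      intro x
      rw [← Real.rpow_mul (hW x y).le]
      congr 1
      field_simp
    calc (∑ x, Pt x * W x y ^ α) ^ (β / α) ≤ ∑ x, Pt x * (W x y ^ α) ^ (β / α) := h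
      _ = ∑ x, Pt x * W x y ^ β := by simp_rw [he]
  set M := Finset.univ.sup' Finset.univ_nonempty
      (fun x => ∑ y, W x' y ^ (1 - β) * W x y ^ β) with hM
  have hc : ∀ y, 0 ≤ W x' y ^ (1 - β) := fun y => Real.rpow_nonneg (hW x' y).le _
  have hswap : ∑ y, W x' y ^ (1 - β) * ∑ x, Pt x * W x y ^ β
      = ∑ x, Pt x * ∑ y, W x' y ^ (1 - β) * W x y ^ β := by
    simp_rw [Finset.mul_sum]
    rw [Finset.sum_comm]
    apply Finset.sum_congr rfl
    intro x _
    apply Finset.sum_congr rfl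
    intro y _
    ring
  calc ∑ y, W x' y ^ (1 - β) * (∑ x, Pt x * W x y ^ α) ^ (β / α)
      ≤ ∑ y, W x' y ^ (1 - β) * ∑ x, Pt x * W x y ^ β :=
        Finset.sum_le_sum fun y _ => mul_le_mul_of_nonneg_left (step1 y) (hc y)
    _ = ∑ x, Pt x * ∑ y, W x' y ^ (1 - β) * W x y ^ β := hswap
    _ ≤ ∑ x, Pt x * M :=
        Finset.sum_le_sum fun x _ => mul_le_mul_of_nonneg_left
          (Finset.le_sup' (fun x => ∑ y, W x' y ^ (1 - β) * W x y ^ β) (Finset.mem_univ x)) (hPt x)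
    _ = M := by rw [← Finset.sum_mul, hPt1, one_mul]

lemma keyB (W : X → Y → ℝ) (x₀ : X) (y : Y) {α : ℝ} :
    ∑ x, (if x = x₀ then (1:ℝ) else 0) * W x y ^ α = W x₀ y ^ α := by
  simp [ite_mul, Finset.sum_ite_eq']

lemma keyDelta (W : X → Y → ℝ) (hW : ∀ x y, 0 < W x y)
    {α β : ℝ} (hα : 1 < α) (x' x₀ : X) :
    ∑ y, W x' y ^ (1 - β) * (∑ x, (if x = x₀ then (1:ℝ) else 0) * W x y ^ α) ^ (β / α)
      = ∑ y, W x' y ^ (1 - β) * W x₀ y ^ β := by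
  have hα0 : α ≠ 0 := by positivity
  apply Finset.sum_congr rfl
  intro y _
  rw [keyB]
  rw [← Real.rpow_mul (hW x₀ y).le]
  congr 2
  field_simp

lemma keyPos (W : X → Y → ℝ) (hW : ∀ x y, 0 < W x y)
    {α β : ℝ} (x' : X) (Pt : X → ℝ) (hPt : ∀ x, 0 ≤ Pt x) (hPt1 : ∑ x, Pt x = 1) :
    0 < ∑ y, W x' y ^ (1 - β) * (∑ x, Pt x * W x y ^ α) ^ (β / α) := by
  have hex : ∃ x, 0 < Pt x := by
    by_contra h
    push_neg at h
    have : ∑ x, Pt x = 0 := Finset.sum_eq_zero fun x _ => le_antisymm (h x) (hPt x)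
    rw [hPt1] at this; norm_num at this
  obtain ⟨x₁, hx₁⟩ := hex
  apply Finset.sum_pos
  · intro y _
    apply mul_pos (Real.rpow_pos_of_pos (hW x' y) _)
    apply Real.rpow_pos_of_pos
    apply Finset.sum_pos' (fun x _ => mul_nonneg (hPt x) (Real.rpow_nonneg (hW x y).le _))
    exact ⟨x₁, Finset.mem_univ x₁, mul_pos hx₁ (Real.rpow_pos_of_pos (hW x₁ y) _)⟩
  · exact Finset.univ_nonempty

end Aux

theorem stmt5 {X Y : Type*} [Fintype X] [Nonempty X] [Fintype Y] [Nonempty Y]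
    (W : X → Y → ℝ) (hW : ∀ x y, 0 < W x y) (hWsum : ∀ x, ∑ y, W x y = 1)
    {α β : ℝ} (hα : 1 < α) (hβ : α ≤ β) :
    (∀ x' : X,
      sSup {v : ℝ | ∃ Pt : X → ℝ, (∀ x, 0 ≤ Pt x) ∧ (∑ x, Pt x = 1) ∧
          v = ∑ y, W x' y ^ (1 - β) * (∑ x, Pt x * W x y ^ α) ^ (β / α)}
        = Finset.univ.sup' Finset.univ_nonempty
            (fun x => ∑ y, W x' y ^ (1 - β) * W x y ^ β)) ∧
    sSup {v : ℝ | ∃ x' : X, ∃ Pt : X → ℝ, (∀ x, 0 ≤ Pt x) ∧ (∑ x, Pt x = 1) ∧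
        v = (α / ((α - 1) * β)) *
          Real.log (∑ y, W x' y ^ (1 - β) * (∑ x, Pt x * W x y ^ α) ^ (β / α))}
      = Finset.univ.sup' Finset.univ_nonempty
          (fun p : X × X => (α / ((α - 1) * β)) *
            Real.log (∑ y, W p.2 y ^ (1 - β) * W p.1 y ^ β)) := by
  classical
  have hβ0 : (0:ℝ) < β := by linarith
  have hα1 : (0:ℝ) < α - 1 := by linarith
  have hc0 : (0:ℝ) ≤ α / ((α - 1) * β) := by positivity
  have hdelta : ∀ x₀ : X, (∀ x : X, 0 ≤ (if x = x₀ then (1:ℝ) else 0)) ∧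
      (∑ x : X, (if x = x₀ then (1:ℝ) else 0)) = 1 := by
    intro x₀
    constructor
    · intro x; split <;> norm_num
    · simp
  constructor
  · intro x'
    apply le_antisymm
    · apply csSup_le
      · obtain ⟨x₀⟩ := ‹Nonempty X›
        exact ⟨_, ⟨_, (hdelta x₀).1, (hdelta x₀).2, rfl⟩⟩
      · rintro v ⟨Pt, hPt, hPt1, rfl⟩
        exact keyA W hW hα hβ x' Pt hPt hPt1
    · obtain ⟨x₀, -, hx₀⟩ := Finset.exists_mem_eq_sup' Finset.univ_nonempty
        (fun x => ∑ y, W x' y ^ (1 - β) * W x y ^ β)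
      rw [hx₀]
      apply le_csSup
      · exact ⟨_, fun v hv => by
          obtain ⟨Pt, hPt, hPt1, rfl⟩ := hv
          exact keyA W hW hα hβ x' Pt hPt hPt1⟩
      · exact ⟨_, (hdelta x₀).1, (hdelta x₀).2, (keyDelta W hW hα x' x₀).symm⟩
  · have hbound : ∀ v ∈ {v : ℝ | ∃ x' : X, ∃ Pt : X → ℝ, (∀ x, 0 ≤ Pt x) ∧ (∑ x, Pt x = 1) ∧
        v = (α / ((α - 1) * β)) *
          Real.log (∑ y, W x' y ^ (1 - β) * (∑ x, Pt x * W x y ^ α) ^ (β / α))},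
        v ≤ Finset.univ.sup' Finset.univ_nonempty
          (fun p : X × X => (α / ((α - 1) * β)) *
            Real.log (∑ y, W p.2 y ^ (1 - β) * W p.1 y ^ β)) := by
      rintro v ⟨x', Pt, hPt, hPt1, rfl⟩
      obtain ⟨x₀, -, hx₀⟩ := Finset.exists_mem_eq_sup' Finset.univ_nonempty
        (fun x => ∑ y, W x' y ^ (1 - β) * W x y ^ β)
      have h1 : ∑ y, W x' y ^ (1 - β) * (∑ x, Pt x * W x y ^ α) ^ (β / α)
          ≤ ∑ y, W x' y ^ (1 - β) * W x₀ y ^ β := by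
        have := keyA W hW hα hβ x' Pt hPt hPt1
        rw [hx₀] at this
        exact this
      have h2 : Real.log (∑ y, W x' y ^ (1 - β) * (∑ x, Pt x * W x y ^ α) ^ (β / α))
          ≤ Real.log (∑ y, W x' y ^ (1 - β) * W x₀ y ^ β) :=
        Real.log_le_log (keyPos W hW x' Pt hPt hPt1) h1
      calc (α / ((α - 1) * β)) *
            Real.log (∑ y, W x' y ^ (1 - β) * (∑ x, Pt x * W x y ^ α) ^ (β / α))
          ≤ (α / ((α - 1) * β)) * Real.log (∑ y, W x' y ^ (1 - β) * W x₀ y ^ β) :=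
            mul_le_mul_of_nonneg_left h2 hc0
        _ ≤ _ := Finset.le_sup' (f := fun p : X × X => (α / ((α - 1) * β)) *
              Real.log (∑ y, W p.2 y ^ (1 - β) * W p.1 y ^ β)) (Finset.mem_univ (x₀, x'))
    apply le_antisymm
    · apply csSup_le
      · obtain ⟨x₀⟩ := ‹Nonempty X›
        exact ⟨_, x₀, _, (hdelta x₀).1, (hdelta x₀).2, rfl⟩
      · exact hbound
    · obtain ⟨⟨x₀, x'⟩, -, hp⟩ := Finset.exists_mem_eq_sup' Finset.univ_nonempty
        (fun p : X × X => (α / ((α - 1) * β)) *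
          Real.log (∑ y, W p.2 y ^ (1 - β) * W p.1 y ^ β))
      rw [hp]
      apply le_csSup ⟨_, hbound⟩
      refine ⟨x', _, (hdelta x₀).1, (hdelta x₀).2, ?_⟩
      rw [keyDelta W hW hα x' x₀]
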